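/- Let G be a group in which G = A^n for some fixed n and every uncountable subset A ⊆ G (e.g., Shelah's group with n = 6641 under CH, where |G| = ω₁). Then every group bornology 𝓑 on G either equals the power set of G or is contained in the family [G]^{≤ω} of countable subsets of G. -/

import Mathlib

open Pointwise

def IsIdeal {X : Type*} (I : Set (Set X)) : Prop :=
  ∅ ∈ I ∧ (∀ A ∈ I, ∀ B : Set X, B ⊆ A → B ∈ I) ∧ (∀ A ∈ I, ∀ B ∈ I, A ∪ B ∈ I)

def IsBornology {X : Type*} (B : Set (Set X)) : Prop :=
  IsIdeal B ∧ (∀ A : Set X, A.Finite → A ∈ B) ∧ ⋃₀ B = Set.univ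

def IsGroupBornology {G : Type*} [Group G] (I : Set (Set G)) : Prop :=
  IsBornology I ∧ ∀ A ∈ I, ∀ B ∈ I, A * B⁻¹ ∈ I

theorem stmt9 {G : Type*} [Group G] (n : ℕ)
    (hG : ∀ A : Set G, ¬ A.Countable → A ^ n = Set.univ)
    (𝓑 : Set (Set G)) (h𝓑 : IsGroupBornology 𝓑) :
    (∀ S : Set G, S ∈ 𝓑) ∨ (∀ A ∈ 𝓑, A.Countable) := by
  obtain ⟨⟨⟨hempty, hdown, hunion⟩, hfin, hcov⟩, hmul⟩ := h𝓑
  by_cases h : ∀ A ∈ 𝓑, A.Countable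
  · exact Or.inr h
  · left
    push_neg at h
    obtain ⟨A, hA, hAc⟩ := h
    -- inverses are in 𝓑
    have hinv : ∀ B ∈ 𝓑, B⁻¹ ∈ 𝓑 := by
      intro B hB
      have h1 : ({1} : Set G) ∈ 𝓑 := hfin _ (Set.finite_singleton 1)
      have := hmul _ h1 _ hB
      simpa using this
    have hprod : ∀ B ∈ 𝓑, ∀ C ∈ 𝓑, B * C ∈ 𝓑 := by
      intro B hB C hC
      have := hmul _ hB _ (hinv C hC)
      simpa using this
    have hpow : ∀ k : ℕ, A ^ k ∈ 𝓑 := by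
      intro k
      induction k with
      | zero => rw [pow_zero, ← Set.singleton_one]; exact hfin _ (Set.finite_singleton 1)
      | succ k ih =>
        rw [pow_succ]
        exact hprod _ ih _ hA
    have huniv : (Set.univ : Set G) ∈ 𝓑 := by
      rw [← hG A hAc]; exact hpow n
    intro S
    exact hdown _ huniv S (Set.subset_univ S)
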